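/- For every real x > 0, 1 - Φ(x) > π·φ(x)/((π - 1)x + √(2π + x²)). -/

import Mathlib

open MeasureTheory Real

/-- Standard Gaussian density. -/
noncomputable def gaussPdf (x : ℝ) : ℝ := Real.exp (-x ^ 2 / 2) / Real.sqrt (2 * Real.pi)

/-- Standard Gaussian distribution function. -/
noncomputable def gaussCdf (x : ℝ) : ℝ := ∫ t in Set.Iic x, gaussPdf t


lemma gaussPdf_pos (x : ℝ) : 0 < gaussPdf x :=
  div_pos (Real.exp_pos _) (Real.sqrt_pos.2 (by positivity))

lemma gaussPdf_eq (x : ℝ) : gaussPdf x = Real.exp (-(1/2) * x ^ 2) / Real.sqrt (2 * Real.pi) := by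
  unfold gaussPdf; ring_nf

lemma integrable_gaussPdf : Integrable gaussPdf := by
  have h : Integrable (fun x : ℝ => Real.exp (-(1/2) * x ^ 2)) :=
    integrable_exp_neg_mul_sq (by norm_num)
  have := h.div_const (Real.sqrt (2 * Real.pi))
  refine this.congr (Filter.Eventually.of_forall fun x => ?_)
  rw [gaussPdf_eq]

lemma integral_gaussPdf : ∫ x, gaussPdf x = 1 := by
  simp_rw [gaussPdf_eq, integral_div, integral_gaussian]
  rw [div_eq_one_iff_eq (by positivity)]
  congr 1
  rw [div_div_eq_mul_div, div_eq_iff (by norm_num)]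
  ring

lemma gaussCdf_zero : gaussCdf 0 = 1 / 2 := by
  have hs : gaussCdf 0 + ∫ x in Set.Ioi (0:ℝ), gaussPdf x = 1 := by
    rw [gaussCdf, intervalIntegral.integral_Iic_add_Ioi integrable_gaussPdf.integrableOn
      integrable_gaussPdf.integrableOn, integral_gaussPdf]
  have he : gaussCdf 0 = ∫ x in Set.Ioi (0:ℝ), gaussPdf x := by
    rw [gaussCdf]
    have : (∫ x in Set.Iic (0:ℝ), gaussPdf (-x)) = ∫ x in Set.Ioi (-(0:ℝ)), gaussPdf x :=
      integral_comp_neg_Iic 0 gaussPdf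
    simp only [neg_zero] at this
    rw [← this]
    congr 1; ext x; unfold gaussPdf; ring_nf
  linarith

lemma gaussCdf_eq (x : ℝ) : gaussCdf x = gaussCdf 0 + ∫ t in (0:ℝ)..x, gaussPdf t := by
  have := intervalIntegral.integral_Iic_sub_Iic (a := (0:ℝ)) (b := x)
    integrable_gaussPdf.integrableOn integrable_gaussPdf.integrableOn
  rw [gaussCdf, gaussCdf]; linarith

lemma hasDerivAt_gaussCdf (x : ℝ) : HasDerivAt gaussCdf (gaussPdf x) x := by
  have h : HasDerivAt (fun y => ∫ t in (0:ℝ)..y, gaussPdf t) (gaussPdf x) x := by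
    have hc : Continuous gaussPdf := by unfold gaussPdf; continuity
    exact intervalIntegral.integral_hasDerivAt_right
      (hc.intervalIntegrable _ _)
      (hc.aestronglyMeasurable.stronglyMeasurableAtFilter)
      hc.continuousAt
  have := h.const_add (gaussCdf 0)
  simpa [← gaussCdf_eq] using this

lemma tendsto_gaussCdf_atTop : Filter.Tendsto gaussCdf Filter.atTop (nhds 1) := by
  have h : Filter.Tendsto (fun x : ℝ => ∫ t in (0:ℝ)..x, gaussPdf t) Filter.atTop
      (nhds (∫ t in Set.Ioi (0:ℝ), gaussPdf t)) :=
    intervalIntegral_tendsto_integral_Ioi 0 integrable_gaussPdf.integrableOn Filter.tendsto_id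
  have h2 : gaussCdf 0 + ∫ t in Set.Ioi (0:ℝ), gaussPdf t = 1 := by
    rw [gaussCdf, intervalIntegral.integral_Iic_add_Ioi integrable_gaussPdf.integrableOn
      integrable_gaussPdf.integrableOn, integral_gaussPdf]
  have := h.const_add (gaussCdf 0)
  rw [h2] at this
  refine this.congr fun x => ?_
  rw [← gaussCdf_eq]

noncomputable def Dfun (x : ℝ) : ℝ := (Real.pi - 1) * x + Real.sqrt (2 * Real.pi + x ^ 2)
noncomputable def Gfun (x : ℝ) : ℝ := (1 - gaussCdf x) - Real.pi * gaussPdf x / Dfun x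

lemma sqrt_arg_pos (x : ℝ) : 0 < 2 * Real.pi + x ^ 2 := by positivity

lemma u_pos (x : ℝ) : 0 < Real.sqrt (2 * Real.pi + x ^ 2) := Real.sqrt_pos.2 (sqrt_arg_pos x)

lemma u_sq (x : ℝ) : Real.sqrt (2 * Real.pi + x ^ 2) ^ 2 = 2 * Real.pi + x ^ 2 :=
  Real.sq_sqrt (sqrt_arg_pos x).le

lemma Dfun_pos {x : ℝ} (hx : 0 ≤ x) : 0 < Dfun x := by
  have := u_pos x
  have h1 : (0:ℝ) ≤ (Real.pi - 1) * x :=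
    mul_nonneg (by have := Real.pi_gt_three; linarith) hx
  unfold Dfun; linarith

lemma hasDerivAt_u (x : ℝ) :
    HasDerivAt (fun y : ℝ => Real.sqrt (2 * Real.pi + y ^ 2))
      (x / Real.sqrt (2 * Real.pi + x ^ 2)) x := by
  have h1 : HasDerivAt (fun y : ℝ => 2 * Real.pi + y ^ 2) (2 * x) x := by
    simpa using ((hasDerivAt_pow 2 x).const_add (2 * Real.pi))
  have h2 := (h1.sqrt (by positivity))
  refine h2.congr_deriv ?_
  field_simp

lemma hasDerivAt_D (x : ℝ) :
    HasDerivAt Dfun ((Real.pi - 1) + x / Real.sqrt (2 * Real.pi + x ^ 2)) x := by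
  unfold Dfun
  have := ((hasDerivAt_id x).const_mul (Real.pi - 1)).add (hasDerivAt_u x)
  exact this.congr_deriv (by ring)

lemma hasDerivAt_gaussPdf (x : ℝ) : HasDerivAt gaussPdf (-x * gaussPdf x) x := by
  have h1 : HasDerivAt (fun y : ℝ => -y ^ 2 / 2) (-x) x := by
    have := (hasDerivAt_pow 2 x).neg.div_const 2
    exact this.congr_deriv (by ring)
  have h2 := (h1.exp).div_const (Real.sqrt (2 * Real.pi))
  unfold gaussPdf
  exact h2.congr_deriv (by ring)

lemma hasDerivAt_G {x : ℝ} (hx : 0 ≤ x) :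
    HasDerivAt Gfun
      (gaussPdf x * (Real.pi * (x * Dfun x + ((Real.pi - 1) + x / Real.sqrt (2 * Real.pi + x ^ 2)))
        - Dfun x ^ 2) / Dfun x ^ 2) x := by
  have hD := Dfun_pos hx
  have h1 : HasDerivAt (fun y => 1 - gaussCdf y) (-gaussPdf x) x :=
    (hasDerivAt_gaussCdf x).const_sub 1
  have h2 : HasDerivAt (fun y => Real.pi * gaussPdf y) (Real.pi * (-x * gaussPdf x)) x :=
    (hasDerivAt_gaussPdf x).const_mul Real.pi
  have h3 := h2.div (hasDerivAt_D x) hD.ne'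
  have h4 := h1.sub h3
  refine h4.congr_deriv ?_
  field_simp
  ring
noncomputable def xsplit : ℝ :=
  Real.sqrt (2 * Real.pi * (Real.pi - 3) ^ 2 / ((Real.pi - 2) * (4 - Real.pi)))

noncomputable def Nfun (x : ℝ) : ℝ :=
  Real.pi * (x * Dfun x + ((Real.pi - 1) + x / Real.sqrt (2 * Real.pi + x ^ 2))) - Dfun x ^ 2

lemma pi_facts : 3.141592 < Real.pi ∧ Real.pi < 3.141593 :=
  ⟨Real.pi_gt_d6, Real.pi_lt_d6⟩

lemma xsplit_sq : xsplit ^ 2 = 2 * Real.pi * (Real.pi - 3) ^ 2 / ((Real.pi - 2) * (4 - Real.pi)) := by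
  obtain ⟨h1, h2⟩ := pi_facts
  apply Real.sq_sqrt
  apply div_nonneg (by positivity)
  nlinarith

lemma xsplit_pos : 0 < xsplit := by
  obtain ⟨h1, h2⟩ := pi_facts
  apply Real.sqrt_pos.2
  have h3 : (0:ℝ) < (Real.pi - 3) ^ 2 := by nlinarith
  apply div_pos (by nlinarith [Real.pi_pos]) (by nlinarith)

lemma Nu_eq (x : ℝ) :
    Nfun x * Real.sqrt (2 * Real.pi + x ^ 2) =
      Real.sqrt (2 * Real.pi + x ^ 2) * ((Real.pi - 2) * x ^ 2 + Real.pi * (Real.pi - 3))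
      - x * ((Real.pi - 2) * x ^ 2 + Real.pi * (2 * Real.pi - 5)) := by
  have hu2 := u_sq x
  have hu0 := (u_pos x).ne'
  set u := Real.sqrt (2 * Real.pi + x ^ 2) with hu
  have hdiv : x / u * u = x := div_mul_cancel₀ x hu0
  unfold Nfun Dfun
  rw [← hu]
  linear_combination Real.pi * hdiv + ((2 - Real.pi) * x - u) * hu2

lemma sq_diff (x : ℝ) :
    (Real.sqrt (2 * Real.pi + x ^ 2)) ^ 2 * ((Real.pi - 2) * x ^ 2 + Real.pi * (Real.pi - 3)) ^ 2
      - x ^ 2 * ((Real.pi - 2) * x ^ 2 + Real.pi * (2 * Real.pi - 5)) ^ 2 =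
      2 * Real.pi ^ 3 * (Real.pi - 3) ^ 2 - Real.pi ^ 2 * (Real.pi - 2) * (4 - Real.pi) * x ^ 2 := by
  have hu2 := u_sq x
  linear_combination ((Real.pi - 2) * x ^ 2 + Real.pi * (Real.pi - 3)) ^ 2 * hu2

lemma key_ineq {x : ℝ} (hx : 0 < x) (hxs : x < xsplit) :
    Real.pi * (Real.pi - 2) * (4 - Real.pi) * x ^ 2 < 2 * Real.pi ^ 2 * (Real.pi - 3) ^ 2 := by
  obtain ⟨hp1, hp2⟩ := pi_facts
  have hd : (0:ℝ) < (Real.pi - 2) * (4 - Real.pi) := by nlinarith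
  have hx2 : x ^ 2 < xsplit ^ 2 := by
    have := pow_lt_pow_left₀ hxs hx.le (n := 2) (by norm_num)
    exact this
  rw [xsplit_sq] at hx2
  have := (lt_div_iff₀ hd).mp hx2
  nlinarith [Real.pi_pos]

lemma key_ineq' {x : ℝ} (hxs : xsplit < x) :
    2 * Real.pi ^ 2 * (Real.pi - 3) ^ 2 < Real.pi * (Real.pi - 2) * (4 - Real.pi) * x ^ 2 := by
  obtain ⟨hp1, hp2⟩ := pi_facts
  have hd : (0:ℝ) < (Real.pi - 2) * (4 - Real.pi) := by nlinarith
  have hx2 : xsplit ^ 2 < x ^ 2 := by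
    have := pow_lt_pow_left₀ hxs xsplit_pos.le (n := 2) (by norm_num)
    exact this
  rw [xsplit_sq] at hx2
  have := (div_lt_iff₀ hd).mp hx2
  nlinarith [Real.pi_pos]

lemma N_pos {x : ℝ} (hx : 0 < x) (hxs : x < xsplit) : 0 < Nfun x := by
  obtain ⟨hp1, hp2⟩ := pi_facts
  have hu0 := u_pos x
  have hu2 := u_sq x
  set u := Real.sqrt (2 * Real.pi + x ^ 2) with hu
  set A := (Real.pi - 2) * x ^ 2 + Real.pi * (Real.pi - 3) with hA
  set B := (Real.pi - 2) * x ^ 2 + Real.pi * (2 * Real.pi - 5) with hB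
  have hApos : 0 < A := by rw [hA]; nlinarith [sq_nonneg x]
  have hBpos : 0 < B := by rw [hB]; nlinarith [sq_nonneg x]
  have hsq : 0 < u ^ 2 * A ^ 2 - x ^ 2 * B ^ 2 := by
    rw [hu, hA, hB, sq_diff x]
    nlinarith [key_ineq hx hxs, Real.pi_pos]
  have huAxB : x * B < u * A := by
    nlinarith [mul_pos hu0 hApos, mul_pos hx hBpos]
  have hNu : 0 < Nfun x * u := by rw [Nu_eq x, ← hu, ← hA, ← hB]; linarith
  nlinarith [hNu, hu0]
lemma N_neg {x : ℝ} (hxs : xsplit < x) : Nfun x < 0 := by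
  obtain ⟨hp1, hp2⟩ := pi_facts
  have hx : 0 < x := xsplit_pos.trans hxs
  have hu0 := u_pos x
  have hu2 := u_sq x
  set u := Real.sqrt (2 * Real.pi + x ^ 2) with hu
  set A := (Real.pi - 2) * x ^ 2 + Real.pi * (Real.pi - 3) with hA
  set B := (Real.pi - 2) * x ^ 2 + Real.pi * (2 * Real.pi - 5) with hB
  have hApos : 0 < A := by rw [hA]; nlinarith [sq_nonneg x]
  have hBpos : 0 < B := by rw [hB]; nlinarith [sq_nonneg x]
  have hsq : u ^ 2 * A ^ 2 - x ^ 2 * B ^ 2 < 0 := by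
    rw [hu, hA, hB, sq_diff x]
    nlinarith [key_ineq' hxs, Real.pi_pos]
  have huAxB : u * A < x * B := by
    nlinarith [mul_pos hu0 hApos, mul_pos hx hBpos]
  have hNu : Nfun x * u < 0 := by rw [Nu_eq x, ← hu, ← hA, ← hB]; linarith
  nlinarith [hNu, hu0]

lemma deriv_G_eq {x : ℝ} (hx : 0 ≤ x) :
    deriv Gfun x = gaussPdf x * Nfun x / Dfun x ^ 2 := (hasDerivAt_G hx).deriv

lemma G_diffble {x : ℝ} (hx : 0 ≤ x) : DifferentiableAt ℝ Gfun x :=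
  (hasDerivAt_G hx).differentiableAt

lemma G_contOn {s : Set ℝ} (hs : ∀ x ∈ s, (0:ℝ) ≤ x) : ContinuousOn Gfun s :=
  fun x hx => (G_diffble (hs x hx)).continuousAt.continuousWithinAt

lemma G_strictMonoOn : StrictMonoOn Gfun (Set.Icc 0 xsplit) := by
  apply strictMonoOn_of_deriv_pos (convex_Icc 0 xsplit)
  · exact G_contOn (fun x hx => hx.1)
  · intro x hx
    rw [interior_Icc] at hx
    rw [deriv_G_eq hx.1.le]
    have hD := Dfun_pos hx.1.le
    exact div_pos (mul_pos (gaussPdf_pos x) (N_pos hx.1 hx.2)) (by positivity)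

lemma G_strictAntiOn : StrictAntiOn Gfun (Set.Ici xsplit) := by
  apply strictAntiOn_of_deriv_neg (convex_Ici xsplit)
  · exact G_contOn (fun x hx => le_trans xsplit_pos.le hx)
  · intro x hx
    rw [interior_Ici] at hx
    have hx0 : 0 < x := xsplit_pos.trans hx
    rw [deriv_G_eq hx0.le]
    have hD := Dfun_pos hx0.le
    apply div_neg_of_neg_of_pos _ (by positivity)
    exact mul_neg_of_pos_of_neg (gaussPdf_pos x) (N_neg hx)

lemma G_zero : Gfun 0 = 0 := by
  have h2pi : (0:ℝ) < Real.sqrt (2 * Real.pi) := Real.sqrt_pos.2 (by positivity)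
  have hsq : Real.sqrt (2 * Real.pi) * Real.sqrt (2 * Real.pi) = 2 * Real.pi :=
    Real.mul_self_sqrt (by positivity)
  unfold Gfun Dfun gaussPdf
  rw [gaussCdf_zero]
  have h1 : (-(0:ℝ) ^ 2 / 2) = 0 := by norm_num
  have h2 : 2 * Real.pi + (0:ℝ) ^ 2 = 2 * Real.pi := by ring
  rw [h1, h2, Real.exp_zero, mul_zero, zero_add]
  have key : Real.pi * (1 / Real.sqrt (2 * Real.pi)) / Real.sqrt (2 * Real.pi) = 1 / 2 := by
    have hsq2 : Real.sqrt 2 * Real.sqrt Real.pi * (Real.sqrt 2 * Real.sqrt Real.pi)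
        = 2 * Real.pi := by
      rw [← Real.sqrt_mul (by norm_num) Real.pi]; exact hsq
    field_simp
    linarith [hsq2, Real.sq_sqrt (show (0:ℝ) ≤ Real.pi * 2 by positivity)]
  rw [key]
  norm_num

lemma tendsto_G_atTop : Filter.Tendsto Gfun Filter.atTop (nhds 0) := by
  have h1 : Filter.Tendsto (fun x => 1 - gaussCdf x) Filter.atTop (nhds 0) := by
    have := tendsto_gaussCdf_atTop.const_sub 1
    simpa using this
  have h2 : Filter.Tendsto (fun x => Real.pi * gaussPdf x / Dfun x) Filter.atTop (nhds 0) := by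
    have hpdf : Filter.Tendsto gaussPdf Filter.atTop (nhds 0) := by
      unfold gaussPdf
      rw [show (0:ℝ) = 0 / Real.sqrt (2 * Real.pi) by simp]
      apply Filter.Tendsto.div_const
      apply Real.tendsto_exp_atBot.comp
      apply Filter.Tendsto.atBot_div_const (by norm_num)
      apply Filter.tendsto_neg_atBot_iff.mpr
      exact (Filter.tendsto_pow_atTop (n := 2) (by norm_num)).comp Filter.tendsto_id
    apply squeeze_zero' (g := fun x => Real.pi * gaussPdf x / Real.sqrt (2 * Real.pi))
    · filter_upwards [Filter.eventually_ge_atTop (0:ℝ)] with x hx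
      have hphi := gaussPdf_pos x
      have hD := Dfun_pos hx
      positivity
    · filter_upwards [Filter.eventually_ge_atTop (0:ℝ)] with x hx
      have hphi := gaussPdf_pos x
      have hnum : (0:ℝ) ≤ Real.pi * gaussPdf x := by positivity
      have hs : Real.sqrt (2 * Real.pi) ≤ Dfun x := by
        have hmono : Real.sqrt (2 * Real.pi) ≤ Real.sqrt (2 * Real.pi + x ^ 2) :=
          Real.sqrt_le_sqrt (by nlinarith [sq_nonneg x])
        have hterm : (0:ℝ) ≤ (Real.pi - 1) * x :=
          mul_nonneg (by nlinarith [Real.pi_gt_three]) hx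
        unfold Dfun; linarith
      exact div_le_div_of_nonneg_left hnum (Real.sqrt_pos.2 (by positivity)) hs
    · have := (hpdf.const_mul Real.pi).div_const (Real.sqrt (2 * Real.pi))
      simpa using this
  have := h1.sub h2
  rw [sub_zero] at this
  exact this
lemma G_pos {x : ℝ} (hx : 0 < x) : 0 < Gfun x := by
  rcases le_or_gt x xsplit with hle | hgt
  · have h0 : (0:ℝ) ∈ Set.Icc (0:ℝ) xsplit := ⟨le_refl 0, xsplit_pos.le⟩
    have hxm : x ∈ Set.Icc (0:ℝ) xsplit := ⟨hx.le, hle⟩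
    have := G_strictMonoOn h0 hxm hx
    rwa [G_zero] at this
  · have hxm : x ∈ Set.Ici xsplit := hgt.le
    have hxm1 : x + 1 ∈ Set.Ici xsplit := by simp only [Set.mem_Ici]; linarith
    have h1 : 0 ≤ Gfun (x + 1) := by
      refine le_of_tendsto tendsto_G_atTop ?_
      filter_upwards [Filter.eventually_ge_atTop (x + 1)] with y hy
      exact G_strictAntiOn.antitoneOn hxm1 (Set.mem_Ici.2 (le_trans hxm1 hy)) hy
    have h2 : Gfun (x + 1) < Gfun x := G_strictAntiOn hxm hxm1 (by linarith)
    linarith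

/-- Finite continued fraction `hcf k g x = x + 1/(x + 2/(⋯ + k/(g x)))`,
with `hcf 0 g = g`. -/
noncomputable def hcf : ℕ → (ℝ → ℝ) → ℝ → ℝ
  | 0, g => g
  | (k + 1), g => hcf k (fun x => x + ((k : ℝ) + 1) / g x)

/-- The new lower bound (LB1). -/
theorem new_lower_bound (x : ℝ) (hx : 0 < x) :
    1 - gaussCdf x >
      Real.pi * gaussPdf x / ((Real.pi - 1) * x + Real.sqrt (2 * Real.pi + x ^ 2)) := by
  have hG := G_pos hx
  unfold Gfun Dfun at hG
  linarith
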